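/- (Three-orbit computation from the Appendix.) Let B be the subgroup of upper-triangular invertible matrices in GL_2(E), and let B̄_0(F) be the subgroup of lower-triangular matrices in GU(w_2)(F) = {h ∈ GL_2(E) : ᵗh̄·w_2·h = λ(h)·w_2 for some λ(h) ∈ F^×}. Then the double coset space B\GL_2(E)/B̄_0(F) has exactly 3 elements, represented by I_2, w_2 = [[0,1],[1,0]], and [[1,0],[1,1]]; that is, GL_2(E) is the disjoint union of the three double cosets B·B̄_0(F), B·w_2·B̄_0(F) and B·[[1,0],[1,1]]·B̄_0(F). -/

import Mathlib

noncomputable section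

open Matrix

namespace GR

/-- The `n × n` antidiagonal matrix `w_n`. -/
def wMat (E : Type*) [Field E] (n : ℕ) : Matrix (Fin n) (Fin n) E :=
  Matrix.of fun i j => if (i : ℕ) + (j : ℕ) = n - 1 then (1 : E) else 0

/-- The matrix `J_{2n,ε}`, block antidiagonal with middle block `A_ε = diag(-ε, 1)`. -/
def Jmat (E : Type*) [Field E] (n : ℕ) (ε : E) :
    Matrix (Fin (2 * n)) (Fin (2 * n)) E :=
  Matrix.of fun i j =>
    if (i : ℕ) = n - 1 then (if (j : ℕ) = n - 1 then -ε else 0)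
    else if (i : ℕ) = n then (if (j : ℕ) = n then (1 : E) else 0)
    else if (i : ℕ) + (j : ℕ) = 2 * n - 1 then 1 else 0

/-- The similitude equation `ᵗ(σ(g)) * J * g = c • J`. -/
def simEq {E : Type*} [Field E] {m : ℕ} (σ : E → E)
    (J g : Matrix (Fin m) (Fin m) E) (c : E) : Prop :=
  (g.map σ)ᵀ * J * g = c • J

/-- The unitary similitude group `GU(J)(F)`: invertible `g` with
`ᵗ(σ(g)) * J * g = λ(g) • J` for some `λ(g) ∈ F^×`. -/
def GUs (F : Type*) {E : Type*} [Field F] [Field E] [Algebra F E] (σ : E → E)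
    {m : ℕ} (J : Matrix (Fin m) (Fin m) E) : Set (Matrix (Fin m) (Fin m) E) :=
  {g | IsUnit g ∧ ∃ c : F, c ≠ 0 ∧ simEq σ J g (algebraMap F E c)}

/-- The unitary group `U(J)(F)`. -/
def Ugp {E : Type*} [Field E] (σ : E → E) {m : ℕ}
    (J : Matrix (Fin m) (Fin m) E) : Set (Matrix (Fin m) (Fin m) E) :=
  {g | IsUnit g ∧ simEq σ J g 1}

/-- The similitude factor `λ(g)`, as an element of `E` (defined via choice; it is
uniquely determined on `GU(J)(F)`). -/
def lam {E : Type*} [Field E] (σ : E → E) {m : ℕ}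
    (J g : Matrix (Fin m) (Fin m) E) : E :=
  letI := Classical.propDecidable
  if h : ∃ c : E, c ≠ 0 ∧ simEq σ J g c then h.choose else 1

/-- `c ∈ F^×` is a norm from `E^×`. -/
def IsNorm (F : Type*) {E : Type*} [Field F] [Field E] [Algebra F E]
    (σ : E → E) (c : F) : Prop :=
  ∃ t : E, t ≠ 0 ∧ algebraMap F E c = t * σ t

/-- `tr_{E/F}(x)`, as an element of `F` (via choice; well defined when the fixed
field of `σ` is `F`). -/
def trEF (F : Type*) {E : Type*} [Field F] [Field E] [Algebra F E]
    (σ : E → E) (x : E) : F :=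
  letI := Classical.propDecidable
  if h : ∃ a : F, algebraMap F E a = x + σ x then h.choose else 0

def w2 (E : Type*) [Field E] : Matrix (Fin 2) (Fin 2) E := !![0, 1; 1, 0]

/-- `A_ε = diag(-ε, 1)`. -/
def Amat {E : Type*} [Field E] (ε : E) : Matrix (Fin 2) (Fin 2) E := !![-ε, 0; 0, 1]

/-- `J_{6,ε} = [[0, 0, w₂], [0, A_ε, 0], [w₂, 0, 0]]`. -/
def J6 {E : Type*} [Field E] (ε : E) : Matrix (Fin 6) (Fin 6) E :=
  !![0, 0, 0, 0, 0, 1;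
     0, 0, 0, 0, 1, 0;
     0, 0, -ε, 0, 0, 0;
     0, 0, 0, 1, 0, 0;
     0, 1, 0, 0, 0, 0;
     1, 0, 0, 0, 0, 0]

/-- Block diagonal `diag(A, B, C)` with `2 × 2` blocks. -/
def bd3 {E : Type*} [Field E] (A B C : Matrix (Fin 2) (Fin 2) E) :
    Matrix (Fin 6) (Fin 6) E :=
  !![A 0 0, A 0 1, 0, 0, 0, 0;
     A 1 0, A 1 1, 0, 0, 0, 0;
     0, 0, B 0 0, B 0 1, 0, 0;
     0, 0, B 1 0, B 1 1, 0, 0;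
     0, 0, 0, 0, C 0 0, C 0 1;
     0, 0, 0, 0, C 1 0, C 1 1]

/-- `g* = w₂ · ᵗ(σ(g))⁻¹ · w₂`. -/
def gstar {E : Type*} [Field E] (σ : E → E) (g : Matrix (Fin 2) (Fin 2) E) :
    Matrix (Fin 2) (Fin 2) E :=
  w2 E * ((g.map σ)ᵀ)⁻¹ * w2 E

/-- `m(g, h) = diag(g, h, λ(h) • g*)`, where `λ(h)` is computed with respect to the
`2 × 2` Hermitian form `Jh`. -/
def mLevi {E : Type*} [Field E] (σ : E → E) (Jh : Matrix (Fin 2) (Fin 2) E)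
    (g h : Matrix (Fin 2) (Fin 2) E) : Matrix (Fin 6) (Fin 6) E :=
  bd3 g h (lam σ Jh h • gstar σ g)

/-- The unipotent upper triangular matrix `u(X, Y)` with third block `X'`. -/
def uMat {E : Type*} [Field E] (X Y X' : Matrix (Fin 2) (Fin 2) E) :
    Matrix (Fin 6) (Fin 6) E :=
  !![1, 0, X 0 0, X 0 1, Y 0 0, Y 0 1;
     0, 1, X 1 0, X 1 1, Y 1 0, Y 1 1;
     0, 0, 1, 0, X' 0 0, X' 0 1;
     0, 0, 0, 1, X' 1 0, X' 1 1;
     0, 0, 0, 0, 1, 0;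
     0, 0, 0, 0, 0, 1]

/-- `X' = -(A_ε⁻¹ · ᵗX · w₂)`. -/
def Xprime {E : Type*} [Field E] (Aε X : Matrix (Fin 2) (Fin 2) E) :
    Matrix (Fin 2) (Fin 2) E :=
  -(Aε⁻¹ * Xᵀ * w2 E)

/-- The condition `w₂ Y + ᵗY w₂ + ᵗX' A_ε X' = 0`. -/
def Ucond {E : Type*} [Field E] (Aε X Y : Matrix (Fin 2) (Fin 2) E) : Prop :=
  w2 E * Y + Yᵀ * w2 E + (Xprime Aε X)ᵀ * Aε * (Xprime Aε X) = 0

/-- The unipotent radical `U_ε(F)`. -/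
def Uset {E : Type*} [Field E] (Aε : Matrix (Fin 2) (Fin 2) E) :
    Set (Matrix (Fin 6) (Fin 6) E) :=
  {u | ∃ X Y, Ucond Aε X Y ∧ u = uMat X Y (Xprime Aε X)}

/-- The character `ξ_ε(u(X,Y)) = ψ(tr_{E/F}(tr X))`. -/
def xiU (F : Type*) {E : Type*} [Field F] [Field E] [Algebra F E]
    (σ : E → E) (ψ : AddChar F ℂˣ) (u : Matrix (Fin 6) (Fin 6) E) : ℂˣ :=
  ψ (trEF F σ (u 0 2 + u 1 3))

/-- The Levi subgroup `M_ε(F) = {m(g, h)}`. -/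
def Mset (F : Type*) {E : Type*} [Field F] [Field E] [Algebra F E]
    (σ : E → E) (ε : E) : Set (Matrix (Fin 6) (Fin 6) E) :=
  {x | ∃ g h, IsUnit g ∧ h ∈ GUs F σ (Amat ε) ∧ x = mLevi σ (Amat ε) g h}

/-- `H_{0,ε}(F) = {m(h, h)}`. -/
def H0set (F : Type*) {E : Type*} [Field F] [Field E] [Algebra F E]
    (σ : E → E) (ε : E) : Set (Matrix (Fin 6) (Fin 6) E) :=
  {x | ∃ h ∈ GUs F σ (Amat ε), x = mLevi σ (Amat ε) h h}

/-- `H_ε(F) = H_{0,ε}(F) ⋉ U_ε(F)`. -/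
def Hset (F : Type*) {E : Type*} [Field F] [Field E] [Algebra F E]
    (σ : E → E) (ε : E) : Set (Matrix (Fin 6) (Fin 6) E) :=
  {x | ∃ a ∈ H0set F σ ε, ∃ u ∈ Uset (Amat ε), x = a * u}

/-- `H_{1,ε}(F) = H_ε(F) ∩ U(J_{6,ε})(F)`. -/
def H1set (F : Type*) {E : Type*} [Field F] [Field E] [Algebra F E]
    (σ : E → E) (ε : E) : Set (Matrix (Fin 6) (Fin 6) E) :=
  Hset F σ ε ∩ Ugp σ (J6 ε)

/-- The unipotent subgroup `U(F)` of `G(F) = GU(w₆)(F)`. -/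
def UofG (F : Type*) {E : Type*} [Field F] [Field E] [Algebra F E] (σ : E → E) :
    Set (Matrix (Fin 6) (Fin 6) E) :=
  {u | u ∈ GUs F σ (wMat E 6) ∧ ∃ X Y X', u = uMat X Y X'}

/-- `H₀(F) = {diag(h, h, λ(h)·w₂ᵗ(σ h)⁻¹w₂)} ⊆ GU(w₆)(F)`. -/
def H0w (F : Type*) {E : Type*} [Field F] [Field E] [Algebra F E] (σ : E → E) :
    Set (Matrix (Fin 6) (Fin 6) E) :=
  {x | ∃ h ∈ GUs F σ (w2 E), x = mLevi σ (w2 E) h h}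

/-- `H(F) = H₀(F) · U(F) ⊆ GU(w₆)(F)`. -/
def Hw (F : Type*) {E : Type*} [Field F] [Field E] [Algebra F E] (σ : E → E) :
    Set (Matrix (Fin 6) (Fin 6) E) :=
  {x | ∃ a ∈ H0w F σ, ∃ u ∈ UofG F σ, x = a * u}

/-- The double coset `L · x · R`. -/
def dcoset {E : Type*} [Field E] {m : ℕ}
    (L R : Set (Matrix (Fin m) (Fin m) E)) (x : Matrix (Fin m) (Fin m) E) :
    Set (Matrix (Fin m) (Fin m) E) :=
  {y | ∃ p ∈ L, ∃ q ∈ R, y = p * x * q}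

/-- `P(F)`: block upper triangular elements of `GU(w₆)(F)` (2+2+2 blocks). -/
def blockUpperP (F : Type*) {E : Type*} [Field F] [Field E] [Algebra F E] (σ : E → E) :
    Set (Matrix (Fin 6) (Fin 6) E) :=
  {g | g ∈ GUs F σ (wMat E 6) ∧ ∀ i j : Fin 6, (j : ℕ) / 2 < (i : ℕ) / 2 → g i j = 0}

/-- `P̄(F)`: block lower triangular elements of `GU(w₆)(F)` (2+2+2 blocks). -/
def blockLowerP (F : Type*) {E : Type*} [Field F] [Field E] [Algebra F E] (σ : E → E) :
    Set (Matrix (Fin 6) (Fin 6) E) :=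
  {g | g ∈ GUs F σ (wMat E 6) ∧ ∀ i j : Fin 6, (i : ℕ) / 2 < (j : ℕ) / 2 → g i j = 0}

/-- `Q̄(F)`: block lower triangular elements of `GU(w₆)(F)` for `6 = 3 + 3`. -/
def blockLowerQ33 (F : Type*) {E : Type*} [Field F] [Field E] [Algebra F E] (σ : E → E) :
    Set (Matrix (Fin 6) (Fin 6) E) :=
  {g | g ∈ GUs F σ (wMat E 6) ∧ ∀ i j : Fin 6, (i : ℕ) < 3 → 3 ≤ (j : ℕ) → g i j = 0}

/-- `Q'(F)`: block lower triangular elements of `GU(w₆)(F)` for `6 = 1 + 4 + 1`. -/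
def blockLowerQ141 (F : Type*) {E : Type*} [Field F] [Field E] [Algebra F E] (σ : E → E) :
    Set (Matrix (Fin 6) (Fin 6) E) :=
  {g | g ∈ GUs F σ (wMat E 6) ∧ (∀ j : Fin 6, 1 ≤ (j : ℕ) → g 0 j = 0) ∧
    (∀ i : Fin 6, (i : ℕ) ≤ 4 → g i 5 = 0)}

/-- the permutation matrix `w_{(653421)}`. -/
def pm653421 (E : Type*) [Field E] : Matrix (Fin 6) (Fin 6) E :=
  !![0, 0, 0, 0, 0, 1;
     0, 0, 0, 0, 1, 0;
     0, 0, 1, 0, 0, 0;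
     0, 0, 0, 1, 0, 0;
     0, 1, 0, 0, 0, 0;
     1, 0, 0, 0, 0, 0]

/-- the permutation matrix `w_{(623451)}`. -/
def pm623451 (E : Type*) [Field E] : Matrix (Fin 6) (Fin 6) E :=
  !![0, 0, 0, 0, 0, 1;
     0, 1, 0, 0, 0, 0;
     0, 0, 1, 0, 0, 0;
     0, 0, 0, 1, 0, 0;
     0, 0, 0, 0, 1, 0;
     1, 0, 0, 0, 0, 0]

/-- the permutation matrix `w_{(351624)}`. -/
def pm351624 (E : Type*) [Field E] : Matrix (Fin 6) (Fin 6) E :=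
  !![0, 0, 1, 0, 0, 0;
     0, 0, 0, 0, 1, 0;
     1, 0, 0, 0, 0, 0;
     0, 0, 0, 0, 0, 1;
     0, 1, 0, 0, 0, 0;
     0, 0, 0, 1, 0, 0]

/-- the permutation matrix `w_{(321654)}`. -/
def pm321654 (E : Type*) [Field E] : Matrix (Fin 6) (Fin 6) E :=
  !![0, 0, 1, 0, 0, 0;
     0, 1, 0, 0, 0, 0;
     1, 0, 0, 0, 0, 0;
     0, 0, 0, 0, 0, 1;
     0, 0, 0, 0, 1, 0;
     0, 0, 0, 1, 0, 0]

/-- the permutation matrix `w_{(654321)}`. -/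
def pm654321 (E : Type*) [Field E] : Matrix (Fin 6) (Fin 6) E :=
  !![0, 0, 0, 0, 0, 1;
     0, 0, 0, 0, 1, 0;
     0, 0, 0, 1, 0, 0;
     0, 0, 1, 0, 0, 0;
     0, 1, 0, 0, 0, 0;
     1, 0, 0, 0, 0, 0]

/-- the permutation matrix `w_{(124356)}`. -/
def pm124356 (E : Type*) [Field E] : Matrix (Fin 6) (Fin 6) E :=
  !![1, 0, 0, 0, 0, 0;
     0, 1, 0, 0, 0, 0;
     0, 0, 0, 1, 0, 0;
     0, 0, 1, 0, 0, 0;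
     0, 0, 0, 0, 1, 0;
     0, 0, 0, 0, 0, 1]


/-- The upper triangular Borel subgroup of `GL₂(E)`. -/
def Bup (E : Type*) [Field E] : Set (Matrix (Fin 2) (Fin 2) E) :=
  {b | IsUnit b ∧ b 1 0 = 0}

/-- The lower triangular Borel subgroup `B̄₀(F)` of `GU(w₂)(F)`. -/
def Bbar0 (F : Type*) {E : Type*} [Field F] [Field E] [Algebra F E] (σ : E → E) :
    Set (Matrix (Fin 2) (Fin 2) E) :=
  {h | h ∈ GUs F σ (w2 E) ∧ h 0 1 = 0}

section Statement18Aux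

variable {F E : Type*} [Field F] [Field E] [Algebra F E]

lemma sim2_entry {σ : E → E} {q : Matrix (Fin 2) (Fin 2) E} {c : E}
    (h : simEq σ (w2 E) q c) (i j : Fin 2) :
    σ (q 0 i) * q 1 j + σ (q 1 i) * q 0 j = c * w2 E i j := by
  have h' := congrFun (congrFun h i) j
  fin_cases i <;> fin_cases j <;>
    (simp [simEq, Matrix.mul_apply, Fin.sum_univ_succ, w2, Matrix.smul_apply,
      Matrix.transpose_apply, Matrix.map_apply] at h' ⊢) <;> linear_combination h'

lemma one_mem_Bup : (1 : Matrix (Fin 2) (Fin 2) E) ∈ Bup E :=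
  ⟨isUnit_one, by simp [Matrix.one_apply]⟩

lemma one_mem_Bbar0 (σ : E ≃ₐ[F] E) : (1 : Matrix (Fin 2) (Fin 2) E) ∈ Bbar0 F (⇑σ) := by
  refine ⟨⟨isUnit_one, 1, one_ne_zero, ?_⟩, by simp [Matrix.one_apply]⟩
  simp [simEq, Matrix.map_one]

lemma detBup {b : Matrix (Fin 2) (Fin 2) E} (hb : b ∈ Bup E) : b 1 1 ≠ 0 := by
  obtain ⟨hU, h10⟩ := hb
  have hd := (Matrix.isUnit_iff_isUnit_det b).mp hU
  rw [Matrix.det_fin_two, h10] at hd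
  intro h; rw [h] at hd; simp at hd

lemma detBbar0 {σ : E → E} {q : Matrix (Fin 2) (Fin 2) E} (hq : q ∈ Bbar0 F σ) :
    q 0 0 ≠ 0 ∧ q 1 1 ≠ 0 := by
  obtain ⟨⟨hU, _⟩, h01⟩ := hq
  have hd := (Matrix.isUnit_iff_isUnit_det q).mp hU
  rw [Matrix.det_fin_two, h01] at hd
  simp only [zero_mul, sub_zero, isUnit_iff_ne_zero, mul_ne_zero_iff] at hd
  exact hd

/-- trace-zero invariant of a matrix in `Bbar0`. -/
lemma TBbar0 (σ : E ≃ₐ[F] E) {q : Matrix (Fin 2) (Fin 2) E} (hq : q ∈ Bbar0 F (⇑σ)) :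
    q 1 0 * σ (q 1 1) + σ (q 1 0) * q 1 1 = 0 := by
  obtain ⟨hq00, _⟩ := detBbar0 hq
  obtain ⟨⟨hU, c, hc, hsim⟩, h01⟩ := hq
  have e0 := sim2_entry hsim 0 0
  have e1 := sim2_entry hsim 0 1
  have e2 := sim2_entry hsim 1 0
  simp [w2, h01] at e0 e1 e2
  have hσq00 : σ (q 0 0) ≠ 0 := fun h => hq00 (by simpa using congrArg σ.symm h)
  have key : (q 1 0 * σ (q 1 1) + σ (q 1 0) * q 1 1) * (q 0 0 * σ (q 0 0)) = 0 := by
    linear_combination (q 1 0 * σ (q 0 0)) * e2 + (σ (q 1 0) * q 0 0) * e1 +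
      algebraMap F E c * e0
  rcases mul_eq_zero.mp key with h | h
  · exact h
  · exact absurd h (mul_ne_zero hq00 hσq00)

lemma dcoset_one_iff (σ : E ≃ₐ[F] E) {g : Matrix (Fin 2) (Fin 2) E} :
    g ∈ dcoset (Bup E) (Bbar0 F (⇑σ)) 1 ↔
      IsUnit g ∧ g 1 1 ≠ 0 ∧ g 1 0 * σ (g 1 1) + σ (g 1 0) * g 1 1 = 0 := by
  constructor
  · rintro ⟨b, hb, q, hq, rfl⟩
    have hb11 := detBup hb
    have ⟨hq00, hq11⟩ := detBbar0 hq
    have hTq := TBbar0 σ hq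
    have hb10 := hb.2
    have h10 : (b * (1 : Matrix (Fin 2) (Fin 2) E) * q) 1 0 = b 1 1 * q 1 0 := by
      simp [Matrix.mul_apply, Fin.sum_univ_two, hb10]
    have h11 : (b * (1 : Matrix (Fin 2) (Fin 2) E) * q) 1 1 = b 1 1 * q 1 1 := by
      simp [Matrix.mul_apply, Fin.sum_univ_two, hb10]
    refine ⟨(hb.1.mul isUnit_one).mul hq.1.1, ?_, ?_⟩
    · rw [h11]; exact mul_ne_zero hb11 hq11
    · rw [h10, h11, _root_.map_mul, _root_.map_mul]
      linear_combination (b 1 1 * σ (b 1 1)) * hTq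
  · rintro ⟨hU, h11, hT⟩
    set s : E := g 1 0 / g 1 1 with hs
    have hg10 : g 1 0 = s * g 1 1 := (div_mul_cancel₀ _ h11).symm
    have hσ11 : σ (g 1 1) ≠ 0 := fun h => h11 (by simpa using congrArg σ.symm h)
    have hstr : s + σ s = 0 := by
      rw [hs, map_div₀]
      field_simp
      linear_combination hT
    refine ⟨g * !![1, 0; -s, 1], ⟨hU.mul ?_, ?_⟩, !![1, 0; s, 1], ⟨⟨?_, 1, one_ne_zero, ?_⟩, ?_⟩, ?_⟩
    · rw [Matrix.isUnit_iff_isUnit_det, Matrix.det_fin_two_of]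
      norm_num
    · simp [Matrix.mul_apply, Fin.sum_univ_two, hg10]; ring
    · rw [Matrix.isUnit_iff_isUnit_det, Matrix.det_fin_two_of]
      norm_num
    · show _ = _
      ext i j
      fin_cases i <;> fin_cases j <;>
        simp [simEq, w2, Matrix.mul_apply, Fin.sum_univ_two, Matrix.map_apply] <;>
        linear_combination hstr
    · simp
    · rw [mul_one, mul_assoc, show (!![1, 0; -s, 1] : Matrix (Fin 2) (Fin 2) E) * !![1, 0; s, 1] = 1 by
        rw [Matrix.mul_fin_two, Matrix.one_fin_two]; norm_num, mul_one]

lemma w2_mul_w2 : w2 E * w2 E = 1 := by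
  rw [w2, Matrix.mul_fin_two, Matrix.one_fin_two]; norm_num

lemma w2_unit : IsUnit (w2 E) := by
  rw [Matrix.isUnit_iff_isUnit_det, w2, Matrix.det_fin_two_of]
  simpa using isUnit_one.neg

lemma dcoset_w2_iff (σ : E ≃ₐ[F] E) {g : Matrix (Fin 2) (Fin 2) E} :
    g ∈ dcoset (Bup E) (Bbar0 F (⇑σ)) (w2 E) ↔ IsUnit g ∧ g 1 1 = 0 := by
  constructor
  · rintro ⟨b, hb, q, hq, rfl⟩
    have hw : IsUnit (w2 E) := w2_unit
    refine ⟨(hb.1.mul hw).mul hq.1.1, ?_⟩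
    have hb10 := hb.2
    have hq01 := hq.2
    simp [Matrix.mul_apply, Fin.sum_univ_two, hb10, hq01, w2]
  · rintro ⟨hU, h11⟩
    have hw : IsUnit (w2 E) := w2_unit
    refine ⟨g * w2 E, ⟨hU.mul hw, ?_⟩, 1, one_mem_Bbar0 σ, ?_⟩
    · simp [Matrix.mul_apply, Fin.sum_univ_two, w2, h11]
    · rw [mul_one, mul_assoc, w2_mul_w2, mul_one]

lemma dcoset_u_iff [CharZero F] (σ : E ≃ₐ[F] E)
    (hσinv : ∀ x : E, σ (σ x) = x)
    (hfix : ∀ x : E, σ x = x → ∃ a : F, algebraMap F E a = x)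
    {g : Matrix (Fin 2) (Fin 2) E} :
    g ∈ dcoset (Bup E) (Bbar0 F (⇑σ)) !![1, 0; 1, 1] ↔
      IsUnit g ∧ g 1 1 ≠ 0 ∧ g 1 0 * σ (g 1 1) + σ (g 1 0) * g 1 1 ≠ 0 := by
  have hinj : Function.Injective (algebraMap F E) := (algebraMap F E).injective
  haveI : CharZero E := charZero_of_injective_algebraMap hinj
  constructor
  · rintro ⟨b, hb, q, hq, rfl⟩
    have hb11 := detBup hb
    have ⟨hq00, hq11⟩ := detBbar0 hq
    have hTq := TBbar0 σ hq
    have hb10 := hb.2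
    have hq01 := hq.2
    obtain ⟨c, hc, hsim⟩ := hq.1.2
    have e1 := sim2_entry hsim 0 1
    have e2 := sim2_entry hsim 1 0
    simp [w2, hq01] at e1 e2
    have hσb11 : σ (b 1 1) ≠ 0 := fun h => hb11 (by simpa using congrArg σ.symm h)
    have hC : algebraMap F E c ≠ 0 := fun h => hc (hinj (by simpa using h))
    have h10 : ((b * !![1, 0; 1, 1] * q : Matrix (Fin 2) (Fin 2) E)) 1 0 = b 1 1 * (q 0 0 + q 1 0) := by
      simp [Matrix.mul_apply, Fin.sum_univ_two, hb10]; ring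
    have h11 : ((b * !![1, 0; 1, 1] * q : Matrix (Fin 2) (Fin 2) E)) 1 1 = b 1 1 * q 1 1 := by
      simp [Matrix.mul_apply, Fin.sum_univ_two, hb10, hq01]
    have hu : IsUnit (!![1, 0; 1, 1] : Matrix (Fin 2) (Fin 2) E) := by
      rw [Matrix.isUnit_iff_isUnit_det, Matrix.det_fin_two_of]; norm_num
    refine ⟨(hb.1.mul hu).mul hq.1.1, ?_, ?_⟩
    · rw [h11]; exact mul_ne_zero hb11 hq11
    · rw [h10, h11, _root_.map_mul, _root_.map_mul, _root_.map_add]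
      have key : b 1 1 * (q 0 0 + q 1 0) * (σ (b 1 1) * σ (q 1 1)) +
          σ (b 1 1) * (σ (q 0 0) + σ (q 1 0)) * (b 1 1 * q 1 1) =
          2 * algebraMap F E c * (b 1 1 * σ (b 1 1)) := by
        linear_combination (b 1 1 * σ (b 1 1)) * e1 + (b 1 1 * σ (b 1 1)) * e2 +
          (b 1 1 * σ (b 1 1)) * hTq
      rw [key]
      exact mul_ne_zero (mul_ne_zero two_ne_zero hC) (mul_ne_zero hb11 hσb11)
  · rintro ⟨hU, h11, hT⟩
    set s : E := g 1 0 / g 1 1 with hs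
    have hg10 : g 1 0 = s * g 1 1 := (div_mul_cancel₀ _ h11).symm
    have hσ11 : σ (g 1 1) ≠ 0 := fun h => h11 (by simpa using congrArg σ.symm h)
    set τ : E := s + σ s with hτ
    have hτfix : σ τ = τ := by
      rw [hτ, _root_.map_add, hσinv, add_comm]
    obtain ⟨t, ht⟩ := hfix τ hτfix
    have hτne : τ ≠ 0 := by
      intro h
      apply hT
      have hkey : g 1 0 * σ (g 1 1) + σ (g 1 0) * g 1 1 = τ * (g 1 1 * σ (g 1 1)) := by
        rw [hτ, hs, map_div₀]; field_simp
      rw [hkey, h, zero_mul]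
    have htne : t ≠ 0 := fun h => hτne (by rw [← ht, h, map_zero])
    have h2τ : (2 : E) / τ = algebraMap F E (2 / t) := by
      rw [map_div₀, ht, map_ofNat]
    have hστ : σ ((2 : E) / τ) = 2 / τ := by
      rw [map_div₀, hτfix, map_ofNat]
    refine ⟨g * !![1, 0; -s, τ / 2], ⟨hU.mul ?_, ?_⟩,
      !![1, 0; 2 * s / τ - 1, 2 / τ], ⟨⟨?_, 2 / t, div_ne_zero two_ne_zero htne, ?_⟩, ?_⟩, ?_⟩
    · rw [Matrix.isUnit_iff_isUnit_det, Matrix.det_fin_two_of,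
        show (1 : E) * (τ / 2) - 0 * (-s) = τ / 2 by ring, isUnit_iff_ne_zero]
      exact div_ne_zero hτne two_ne_zero
    · simp [Matrix.mul_apply, Fin.sum_univ_two, hg10]; ring
    · rw [Matrix.isUnit_iff_isUnit_det, Matrix.det_fin_two_of,
        show (1 : E) * (2 / τ) - 0 * (2 * s / τ - 1) = 2 / τ by ring, isUnit_iff_ne_zero]
      exact div_ne_zero two_ne_zero hτne
    · show _ = _
      ext i j
      fin_cases i <;> fin_cases j <;>
        simp [simEq, w2, Matrix.mul_apply, Fin.sum_univ_two, Matrix.map_apply,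
          map_sub, map_div₀, _root_.map_mul, map_ofNat, hτfix, ← h2τ] <;>
        field_simp <;> ring
    · simp
    · rw [mul_assoc, mul_assoc, show (!![1, 0; 1, 1] : Matrix (Fin 2) (Fin 2) E) *
        !![1, 0; 2 * s / τ - 1, 2 / τ] = !![1, 0; 2 * s / τ, 2 / τ] by
          rw [Matrix.mul_fin_two]; norm_num,
        show (!![1, 0; -s, τ / 2] : Matrix (Fin 2) (Fin 2) E) *
        !![1, 0; 2 * s / τ, 2 / τ] = 1 by
          rw [Matrix.mul_fin_two, Matrix.one_fin_two]
          congr 1 <;> field_simp <;> ring_nf <;> simp [hτne],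
        mul_one]

end Statement18Aux

/-- `B\GL₂(E)/B̄₀(F)` has exactly 3 elements, represented by `I₂`,
`w₂` and `[[1,0],[1,1]]`, and `GL₂(E)` is their disjoint union. -/
theorem statement18
    (F E : Type*) [Field F] [Field E] [Algebra F E] [CharZero F]
    (hquad : Module.finrank F E = 2)
    (σ : E ≃ₐ[F] E)
    (hσinv : ∀ x : E, σ (σ x) = x)
    (hσnt : ∃ x : E, σ x ≠ x)
    (hfix : ∀ x : E, σ x = x → ∃ a : F, algebraMap F E a = x) :
    dcoset (Bup E) (Bbar0 F (⇑σ)) 1 ∪ dcoset (Bup E) (Bbar0 F (⇑σ)) (w2 E) ∪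
        dcoset (Bup E) (Bbar0 F (⇑σ)) !![1, 0; 1, 1] =
      {g : Matrix (Fin 2) (Fin 2) E | IsUnit g} ∧
    dcoset (Bup E) (Bbar0 F (⇑σ)) 1 ∩ dcoset (Bup E) (Bbar0 F (⇑σ)) (w2 E) = ∅ ∧
    dcoset (Bup E) (Bbar0 F (⇑σ)) 1 ∩ dcoset (Bup E) (Bbar0 F (⇑σ)) !![1, 0; 1, 1] = ∅ ∧
    dcoset (Bup E) (Bbar0 F (⇑σ)) (w2 E) ∩
        dcoset (Bup E) (Bbar0 F (⇑σ)) !![1, 0; 1, 1] = ∅ ∧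
    (1 : Matrix (Fin 2) (Fin 2) E) ∈ dcoset (Bup E) (Bbar0 F (⇑σ)) 1 ∧
    w2 E ∈ dcoset (Bup E) (Bbar0 F (⇑σ)) (w2 E) ∧
    (!![1, 0; 1, 1] : Matrix (Fin 2) (Fin 2) E) ∈
      dcoset (Bup E) (Bbar0 F (⇑σ)) !![1, 0; 1, 1] := by
  refine ⟨?_, ?_, ?_, ?_, ?_, ?_, ?_⟩
  · ext g
    simp only [Set.mem_union, Set.mem_setOf_eq, dcoset_one_iff σ, dcoset_w2_iff σ,
      dcoset_u_iff σ hσinv hfix]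
    constructor
    · rintro ((⟨h, _⟩ | ⟨h, _⟩) | ⟨h, _⟩) <;> exact h
    · intro hU
      by_cases h11 : g 1 1 = 0
      · exact Or.inl (Or.inr ⟨hU, h11⟩)
      · by_cases hT : g 1 0 * σ (g 1 1) + σ (g 1 0) * g 1 1 = 0
        · exact Or.inl (Or.inl ⟨hU, h11, hT⟩)
        · exact Or.inr ⟨hU, h11, hT⟩
  · ext g
    simp only [Set.mem_inter_iff, dcoset_one_iff σ, dcoset_w2_iff σ, Set.mem_empty_iff_false,
      iff_false]
    rintro ⟨⟨_, h11, _⟩, _, h11'⟩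
    exact h11 h11'
  · ext g
    simp only [Set.mem_inter_iff, dcoset_one_iff σ, dcoset_u_iff σ hσinv hfix,
      Set.mem_empty_iff_false, iff_false]
    rintro ⟨⟨_, _, hT⟩, _, _, hT'⟩
    exact hT' hT
  · ext g
    simp only [Set.mem_inter_iff, dcoset_w2_iff σ, dcoset_u_iff σ hσinv hfix,
      Set.mem_empty_iff_false, iff_false]
    rintro ⟨⟨_, h11⟩, _, h11', _⟩
    exact h11' h11
  · exact ⟨1, one_mem_Bup, 1, one_mem_Bbar0 σ, by simp⟩
  · exact ⟨1, one_mem_Bup, 1, one_mem_Bbar0 σ, by simp⟩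
  · exact ⟨1, one_mem_Bup, 1, one_mem_Bbar0 σ, by simp⟩
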